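/- Let M be a von Neumann algebra acting on a Hilbert space H and T : M → M a normal unital completely positive map. If T admits a normal unital completely positive extension T̃ : B(H) → B(H) that restricts to the identity on the commutant M′, then T is inner: there exist operators k_α ∈ M with Σ k_α* k_α = 1 and T(a) = Σ k_α* a k_α for all a ∈ M. -/

import Mathlib

open scoped InnerProductSpace

/-- If a normal unital completely positive map `T` on a von Neumann algebra `M ⊆ B(H)`
admits a normal unital completely positive extension `T̃` to `B(H)` restricting to the
identity on the commutant `M′`, then `T` is inner: it admits a Kraus decomposition
`T(a) = Σ k_α* a k_α` with Kraus operators `k_α ∈ M` satisfying `Σ k_α* k_α = 1`.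
(Normality and complete positivity of the extension are encoded by the existence of a
Kraus decomposition, the sums converging in the weak operator topology.) -/
theorem stmt11 {H : Type} [NormedAddCommGroup H] [InnerProductSpace ℂ H]
    [CompleteSpace H] (M : VonNeumannAlgebra H)
    (Tt : (H →L[ℂ] H) →ₗ[ℂ] (H →L[ℂ] H))
    (hM : ∀ a ∈ M, Tt a ∈ M)
    (hunital : Tt 1 = 1)
    (hKraus : ∃ (ι : Type) (k : ι → H →L[ℂ] H),
      ∀ (a : H →L[ℂ] H) (x y : H),
        HasSum (fun α => (inner ℂ x ((star (k α) * a * k α) y) : ℂ))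
          (inner ℂ x (Tt a y)))
    (hcomm : ∀ y ∈ M.commutant, Tt y = y) :
    ∃ (ι : Type) (k : ι → H →L[ℂ] H), (∀ α, k α ∈ M) ∧
      (∀ x y : H, HasSum (fun α => (inner ℂ x ((star (k α) * k α) y) : ℂ))
        (inner ℂ x y)) ∧
      (∀ a ∈ M, ∀ x y : H,
        HasSum (fun α => (inner ℂ x ((star (k α) * a * k α) y) : ℂ))
          (inner ℂ x (Tt a y))) := by
  obtain ⟨ι, k, hk⟩ := hKraus
  refine ⟨ι, k, ?_, ?_, fun a _ x y => hk a x y⟩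
  · -- each Kraus operator lies in M = M''
    intro α
    rw [← VonNeumannAlgebra.commutant_commutant M,
      VonNeumannAlgebra.mem_commutant_iff]
    intro y hy
    have hy' : star y ∈ M.commutant := star_mem hy
    have hyy : star y * y ∈ M.commutant := mul_mem hy' hy
    -- it suffices to show (k α * y - y * k α) x = 0 for all x
    have key : ∀ x : H, (k α * y - y * k α) x = 0 := by
      intro x
      have hA := hk 1 (y x) (y x)
      rw [hunital] at hA
      have hB := hk y (y x) x
      rw [hcomm y hy] at hB
      have hC := hk (star y) x (y x)
      rw [hcomm (star y) hy'] at hC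
      have hD := hk (star y * y) x x
      rw [hcomm (star y * y) hyy] at hD
      have hsum := ((hA.add hD).sub (hB.add hC))
      have hval : (inner ℂ (y x) ((1 : H →L[ℂ] H) (y x)) : ℂ)
          + inner ℂ x ((star y * y) x)
          - ((inner ℂ (y x) (y x) : ℂ) + inner ℂ x ((star y) (y x))) = 0 := by
        simp only [ContinuousLinearMap.one_apply, ContinuousLinearMap.mul_apply,
          ContinuousLinearMap.star_eq_adjoint, ContinuousLinearMap.adjoint_inner_right]
        ring
      rw [hval] at hsum
      have hterm : (fun β => ((inner ℂ (y x) ((star (k β) * 1 * k β) (y x)) : ℂ)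
            + inner ℂ x ((star (k β) * (star y * y) * k β) x))
          - ((inner ℂ (y x) ((star (k β) * y * k β) x) : ℂ)
            + inner ℂ x ((star (k β) * star y * k β) (y x))))
          = fun β => ((‖(k β * y - y * k β) x‖ : ℂ)) ^ 2 := by
        funext β
        have : ((‖(k β * y - y * k β) x‖ : ℂ)) ^ 2
            = inner ℂ ((k β * y - y * k β) x) ((k β * y - y * k β) x) := by
          rw [inner_self_eq_norm_sq_to_K]
          norm_cast
        rw [this]
        simp only [ContinuousLinearMap.sub_apply, ContinuousLinearMap.mul_apply,
          ContinuousLinearMap.one_apply, ContinuousLinearMap.star_eq_adjoint,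
          ContinuousLinearMap.adjoint_inner_right, ContinuousLinearMap.adjoint_inner_left,
          inner_sub_left, inner_sub_right]
        ring
      rw [hterm] at hsum
      have hsum' : HasSum (fun β => (‖(k β * y - y * k β) x‖ ^ 2 : ℝ)) 0 := by
        rw [← Complex.hasSum_ofReal]
        convert hsum using 2 with β
        · rfl
        all_goals norm_num
      have hz := (hasSum_zero_iff_of_nonneg (fun β => sq_nonneg _)).mp hsum'
      have : ‖(k α * y - y * k α) x‖ ^ 2 = 0 := congrFun hz α
      have : ‖(k α * y - y * k α) x‖ = 0 := by
        nlinarith [norm_nonneg ((k α * y - y * k α) x)]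
      simpa using this
    have : k α * y - y * k α = 0 := by
      ext x; simpa using key x
    have h' : k α * y = y * k α := by
      have := sub_eq_zero.mp this
      linear_combination (norm := module) this
    exact h'.symm
  · -- Σ k_α* k_α = 1 weakly
    intro x y
    have := hk 1 x y
    rw [hunital] at this
    simpa [mul_one] using this
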